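/- arXiv:2001.09014 — 2 statements merged into one kernel-verified Lean document; each statement's English description precedes it below -/
import Mathlib

section
/- Let μ be an integer-valued random measure with compensator ν such that J = K up to evanescence, let X = X^i + X^p with X^i quasi-left-continuous càdlàg and {ΔX^i ≠ 0} ⊂ D, X^p predictable càdlàg with {ΔX^p ≠ 0} ⊂ J, and let φ ≥ 0 be a predictable random field with φ(·,s,0) = 0 and φ = φ 1_K, with |φ| ⋆ μ^X ∈ A⁺. Then ∫_{]0,·]×ℝ} φ(s, x) μ^X(ds dx) = ∑_{0<s≤·} φ(s, ΔX^p_s), i.e., the jumps of X^i do not contribute on K. -/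
open MeasureTheory Filter Set Function
open scoped ENNReal

noncomputable section

variable {Ω : Type*}

/-- A real function is càdlàg: right-continuous with finite left limits. -/
def IsCadlag (f : ℝ → ℝ) : Prop :=
  (∀ t : ℝ, ContinuousWithinAt f (Ici t) t) ∧
  (∀ t : ℝ, ∃ l : ℝ, Tendsto f (nhdsWithin t (Iio t)) (nhds l))

/-- Jump of a process at time `t`: `ΔX_t = X_t - X_{t-}`. -/
def jumpOf (X : ℝ → Ω → ℝ) (t : ℝ) (ω : Ω) : ℝ :=
  X t ω - Function.leftLim (fun s => X s ω) t

/-- Sum over the jump times of `X` in `(0,t]` of `g(s, X_{s-}, ΔX_s)`, i.e. the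
integral of `g` against the jump measure `μ^X`, as an `ℝ≥0∞`-valued process. -/
def jumpSum (X : ℝ → Ω → ℝ) (g : ℝ → ℝ → ℝ → ℝ) (t : ℝ) (ω : Ω) : ℝ≥0∞ :=
  ∑' s : {s : ℝ // s ∈ Ioc (0:ℝ) t ∧ jumpOf X s ω ≠ 0},
    ENNReal.ofReal (g (s : ℝ) (Function.leftLim (fun u => X u ω) (s : ℝ)) (jumpOf X (s : ℝ) ω))

/-- Local martingale: there is a localizing sequence of stopping times. -/
def IsLocalMartingale {m : MeasurableSpace Ω} (F : Filtration ℝ m) (P : Measure Ω)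
    (M : ℝ → Ω → ℝ) : Prop :=
  ∃ τ : ℕ → Ω → ℝ,
    (∀ n, IsStoppingTime F (fun ω => (τ n ω : WithTop ℝ))) ∧
    (∀ ω, Tendsto (fun n => τ n ω) atTop atTop) ∧
    (∀ n, Martingale (fun t ω => M (min t (τ n ω)) ω) F P)

/-- Generators of the predictable σ-field: `{0} × A₀` and `(s,t] × A_s`. -/
def predictableRectangles {m : MeasurableSpace Ω} (F : Filtration ℝ m) : Set (Set (ℝ × Ω)) :=
  {S | ∃ s t : ℝ, ∃ A : Set Ω, MeasurableSet[F s] A ∧ S = Ioc s t ×ˢ A} ∪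
  {S | ∃ A : Set Ω, MeasurableSet[F 0] A ∧ S = {(0:ℝ)} ×ˢ A}

/-- The predictable σ-field on `ℝ × Ω`. -/
def predictableSigma {m : MeasurableSpace Ω} (F : Filtration ℝ m) : MeasurableSpace (ℝ × Ω) :=
  MeasurableSpace.generateFrom (predictableRectangles F)

/-- A predictable process. -/
def PredictableProcess {m : MeasurableSpace Ω} (F : Filtration ℝ m) (M : ℝ → Ω → ℝ) : Prop :=
  @Measurable (ℝ × Ω) ℝ (predictableSigma F) _ (fun p => M p.1 p.2)

/-- A predictable random set. -/
def PredictableSet {m : MeasurableSpace Ω} (F : Filtration ℝ m) (S : Set (ℝ × Ω)) : Prop :=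
  MeasurableSet[predictableSigma F] S

/-- A predictable random field `W_s(e)(ω)`, measurable for the σ-field `𝒫 ⊗ B(ℝ)`. -/
def PredictableField {m : MeasurableSpace Ω} (F : Filtration ℝ m)
    (W : ℝ → ℝ → Ω → ℝ) : Prop :=
  @Measurable ((ℝ × Ω) × ℝ) ℝ ((predictableSigma F).prod (inferInstance : MeasurableSpace ℝ)) _
    (fun p => W p.1.1 p.2 p.1.2)

/-- A predictable time: a stopping time admitting an announcing sequence. -/
def IsPredictableTime {m : MeasurableSpace Ω} (F : Filtration ℝ m) (S : Ω → ℝ) : Prop :=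
  IsStoppingTime F (fun ω => (S ω : WithTop ℝ)) ∧
  ∃ τ : ℕ → Ω → ℝ,
    (∀ n, IsStoppingTime F (fun ω => (τ n ω : WithTop ℝ))) ∧
    (∀ n ω, τ n ω ≤ τ (n + 1) ω) ∧
    (∀ ω, Tendsto (fun n => τ n ω) atTop (nhds (S ω))) ∧
    (∀ n ω, 0 < S ω → τ n ω < S ω)

/-- Graph `[[T]]` of a random time (active when `0 < t`). -/
def graphOf (T : Ω → ℝ) : Set (ℝ × Ω) := {p | 0 < p.1 ∧ T p.2 = p.1}

/-- Totally inaccessible time: its graph meets the graph of no predictable time,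
up to a null set. -/
def TotallyInaccessible {m : MeasurableSpace Ω} (F : Filtration ℝ m) (P : Measure Ω)
    (T : Ω → ℝ) : Prop :=
  ∀ S : Ω → ℝ, IsPredictableTime F S → ∀ᵐ ω ∂P, ¬(0 < T ω ∧ T ω = S ω)

/-- An evanescent random set. -/
def Evanescent {m : MeasurableSpace Ω} (P : Measure Ω) (A : Set (ℝ × Ω)) : Prop :=
  ∀ᵐ ω ∂P, ∀ t : ℝ, (t, ω) ∉ A

/-- The class `𝒜⁺_loc` of increasing processes of locally integrable variation. -/
def InAplusLoc {m : MeasurableSpace Ω} (F : Filtration ℝ m) (P : Measure Ω)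
    (A : ℝ → Ω → ℝ≥0∞) : Prop :=
  ∃ τ : ℕ → Ω → ℝ,
    (∀ n, IsStoppingTime F (fun ω => (τ n ω : WithTop ℝ))) ∧
    (∀ ω, Tendsto (fun n => τ n ω) atTop atTop) ∧
    (∀ n, ∫⁻ ω, A (τ n ω) ω ∂P ≠ ⊤)

/-- Purely discontinuous local martingale / orthogonal process: `[M,N] = 0` for every
continuous local martingale `N`, equivalently `M·N` is a local martingale for every
continuous local martingale `N`. -/
def PurelyDiscontinuous {m : MeasurableSpace Ω} (F : Filtration ℝ m) (P : Measure Ω)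
    (M : ℝ → Ω → ℝ) : Prop :=
  ∀ N : ℝ → Ω → ℝ, IsLocalMartingale F P N → (∀ ω, Continuous fun t => N t ω) →
    IsLocalMartingale F P (fun t ω => M t ω * N t ω)

/-- `v` is of class `C^{0,1}` with spatial derivative `vx`. -/
def IsC01 (v vx : ℝ → ℝ → ℝ) : Prop :=
  Continuous (Function.uncurry v) ∧ Continuous (Function.uncurry vx) ∧
  ∀ s x : ℝ, HasDerivAt (fun y => v s y) (vx s x) x

/-- Total mass of the atom of the random measure `ν` at time `t`: `ν̂_t(ℝ)`. -/
def hatNu (ν : Ω → Measure (ℝ × ℝ)) (t : ℝ) (ω : Ω) : ℝ≥0∞ :=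
  ν ω ({t} ×ˢ (univ : Set ℝ))

/-- The atom measure `ν̂_t(de) = ν({t}, de)`. -/
def hatNuMeasure (ν : Ω → Measure (ℝ × ℝ)) (t : ℝ) (ω : Ω) : Measure ℝ :=
  Measure.map Prod.snd ((ν ω).restrict ({t} ×ˢ (univ : Set ℝ)))

/-- `Ŵ_t = ∫ W_t(e) ν̂_t(de)`. -/
def hatW (ν : Ω → Measure (ℝ × ℝ)) (W : ℝ → ℝ → Ω → ℝ) (t : ℝ) (ω : Ω) : ℝ :=
  ∫ e, W t e ω ∂(hatNuMeasure ν t ω)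

/-- The predictable bracket process
`C(W)_{T'} = |W - Ŵ 1_J|² ⋆ ν_{T'} + ∑_{s ≤ T'} (1 - ν̂_s(ℝ)) |Ŵ_s|² 1_{J \ K}(s)`,
where `J = {ν̂ > 0}` and `K = {ν̂ = 1}`. -/
def CW (ν : Ω → Measure (ℝ × ℝ)) (W : ℝ → ℝ → Ω → ℝ) (T' : ℝ) (ω : Ω) : ℝ≥0∞ :=
  (∫⁻ p in Ioc (0:ℝ) T' ×ˢ (univ : Set ℝ),
      ENNReal.ofReal ((W p.1 p.2 ω -
        (if 0 < hatNu ν p.1 ω then hatW ν W p.1 ω else 0)) ^ 2) ∂(ν ω)) +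
  ∑' s : {s : ℝ // s ∈ Ioc (0:ℝ) T' ∧ 0 < hatNu ν s ω ∧ hatNu ν s ω ≠ 1},
    (1 - hatNu ν (s : ℝ) ω) * ENNReal.ofReal ((hatW ν W (s : ℝ) ω) ^ 2)

/-- `‖W‖²_{L²(μ)} = E ∫_{(0,T']×ℝ} |W_s(e)|² ν(ds de)`. -/
def L2normSq {m : MeasurableSpace Ω} (ν : Ω → Measure (ℝ × ℝ)) (W : ℝ → ℝ → Ω → ℝ)
    (T' : ℝ) (P : Measure Ω) : ℝ≥0∞ :=
  ∫⁻ ω, (∫⁻ p in Ioc (0:ℝ) T' ×ˢ (univ : Set ℝ),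
    ENNReal.ofReal ((W p.1 p.2 ω) ^ 2) ∂(ν ω)) ∂P

/-- with `J = K` up to evanescence, `X = X^i + X^p` (`X^i` quasi-left-
continuous with jumps in `D`, `X^p` predictable with jumps in `J`), and `φ ≥ 0`
predictable with `φ(·,0) = 0`, `φ = φ 1_K` and `|φ| ⋆ μ^X ∈ 𝒜⁺`, one has
`∫ φ dμ^X = ∑_{0<s≤·} φ(s, ΔX^p_s)`: the jumps of `X^i` do not contribute on `K`. -/
theorem jumps_of_quasi_left_continuous_part_do_not_contribute_on_K
    {m : MeasurableSpace Ω} (F : Filtration ℝ m) (P : Measure Ω) [IsProbabilityMeasure P]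
    (D J K : Set (ℝ × Ω))
    (hJK : ∀ᵐ ω ∂P, ∀ t : ℝ, (t, ω) ∈ J ↔ (t, ω) ∈ K)
    (hKgraphs : ∃ R : ℕ → Ω → ℝ, (∀ n, IsPredictableTime F (R n)) ∧
      (∀ n k, n ≠ k → Disjoint (graphOf (R n)) (graphOf (R k))) ∧ K = ⋃ n, graphOf (R n))
    (Xi Xp X : ℝ → Ω → ℝ)
    (hXicadlag : ∀ ω, IsCadlag fun t => Xi t ω)
    (hXpcadlag : ∀ ω, IsCadlag fun t => Xp t ω)
    (hqlc : ∀ S : Ω → ℝ, IsPredictableTime F S → ∀ᵐ ω ∂P, 0 < S ω → jumpOf Xi (S ω) ω = 0)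
    (hXiD : ∀ ω t, jumpOf Xi t ω ≠ 0 → (t, ω) ∈ D)
    (hXpJ : ∀ ω t, jumpOf Xp t ω ≠ 0 → (t, ω) ∈ J)
    (hXppred : PredictableProcess F Xp)
    (hX : ∀ t ω, X t ω = Xi t ω + Xp t ω)
    (φ : ℝ → ℝ → Ω → ℝ)
    (hφpred : PredictableField F φ)
    (hφpos : ∀ s x ω, 0 ≤ φ s x ω)
    (hφ0 : ∀ s ω, φ s 0 ω = 0)
    (hφK : ∀ s x ω, (s, ω) ∉ K → φ s x ω = 0)
    (hφint : ∫⁻ ω, (∑' s : {s : ℝ // 0 < s ∧ jumpOf X s ω ≠ 0},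
        ENNReal.ofReal (φ (s : ℝ) (jumpOf X (s : ℝ) ω) ω)) ∂P ≠ ⊤) :
    ∀ᵐ ω ∂P, ∀ t : ℝ,
      (∑' s : {s : ℝ // s ∈ Ioc (0:ℝ) t ∧ jumpOf X s ω ≠ 0},
        ENNReal.ofReal (φ (s : ℝ) (jumpOf X (s : ℝ) ω) ω)) =
      (∑' s : {s : ℝ // s ∈ Ioc (0:ℝ) t ∧ jumpOf Xp s ω ≠ 0},
        ENNReal.ofReal (φ (s : ℝ) (jumpOf Xp (s : ℝ) ω) ω)) := by
  obtain ⟨R, hRpred, -, hKeq⟩ := hKgraphs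
  have hqlcR : ∀ᵐ ω ∂P, ∀ n, 0 < R n ω → jumpOf Xi (R n ω) ω = 0 :=
    ae_all_iff.2 fun n => hqlc (R n) (hRpred n)
  filter_upwards [hqlcR] with ω hω
  intro t
  have hjump : ∀ s, jumpOf X s ω = jumpOf Xi s ω + jumpOf Xp s ω := by
    intro s
    obtain ⟨li, hli⟩ := (hXicadlag ω).2 s
    obtain ⟨lp, hlp⟩ := (hXpcadlag ω).2 s
    have hne : nhdsWithin s (Iio s) ≠ ⊥ := (nhdsLT_neBot s).ne
    have h1 : Function.leftLim (fun u => Xi u ω) s = li := leftLim_eq_of_tendsto hli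
    have h2 : Function.leftLim (fun u => Xp u ω) s = lp := leftLim_eq_of_tendsto hlp
    have h3 : Function.leftLim (fun u => X u ω) s = li + lp := by
      apply leftLim_eq_of_tendsto
      have hXeq : (fun u => X u ω) = fun u => Xi u ω + Xp u ω := funext fun u => hX u ω
      rw [hXeq]; exact hli.add hlp
    simp only [jumpOf, h1, h2, h3, hX s ω]; ring
  have hXiK : ∀ s, (s, ω) ∈ K → jumpOf Xi s ω = 0 := by
    intro s hs
    rw [hKeq] at hs
    obtain ⟨n, hn⟩ := mem_iUnion.1 hs
    have h0 : 0 < R n ω := by rw [hn.2]; exact hn.1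
    have := hω n h0
    rwa [hn.2] at this
  set f : ℝ → ℝ≥0∞ := fun s =>
    if s ∈ Ioc (0:ℝ) t then ENNReal.ofReal (φ s (jumpOf X s ω) ω) else 0 with hf
  set g : ℝ → ℝ≥0∞ := fun s =>
    if s ∈ Ioc (0:ℝ) t then ENNReal.ofReal (φ s (jumpOf Xp s ω) ω) else 0 with hg
  have hfsupp : support f ⊆ {s : ℝ | s ∈ Ioc (0:ℝ) t ∧ jumpOf X s ω ≠ 0} := by
    intro s hs
    by_cases hIoc : s ∈ Ioc (0:ℝ) t
    · refine ⟨hIoc, fun hΔ => ?_⟩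
      apply hs
      simp only [hf, if_pos hIoc, hΔ, hφ0 s ω, ENNReal.ofReal_zero]
    · exact absurd (if_neg hIoc) hs
  have hgsupp : support g ⊆ {s : ℝ | s ∈ Ioc (0:ℝ) t ∧ jumpOf Xp s ω ≠ 0} := by
    intro s hs
    by_cases hIoc : s ∈ Ioc (0:ℝ) t
    · refine ⟨hIoc, fun hΔ => ?_⟩
      apply hs
      simp only [hg, if_pos hIoc, hΔ, hφ0 s ω, ENNReal.ofReal_zero]
    · exact absurd (if_neg hIoc) hs
  have hL : (∑' s : {s : ℝ // s ∈ Ioc (0:ℝ) t ∧ jumpOf X s ω ≠ 0},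
      ENNReal.ofReal (φ (s : ℝ) (jumpOf X (s : ℝ) ω) ω)) = ∑' s : ℝ, f s := by
    rw [← tsum_subtype_eq_of_support_subset hfsupp]
    exact tsum_congr fun s => (if_pos s.2.1).symm
  have hR : (∑' s : {s : ℝ // s ∈ Ioc (0:ℝ) t ∧ jumpOf Xp s ω ≠ 0},
      ENNReal.ofReal (φ (s : ℝ) (jumpOf Xp (s : ℝ) ω) ω)) = ∑' s : ℝ, g s := by
    rw [← tsum_subtype_eq_of_support_subset hgsupp]
    exact tsum_congr fun s => (if_pos s.2.1).symm
  rw [hL, hR]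
  refine tsum_congr fun s => ?_
  by_cases hIoc : s ∈ Ioc (0:ℝ) t
  · by_cases hK : (s, ω) ∈ K
    · have hXi0 := hXiK s hK
      have : jumpOf X s ω = jumpOf Xp s ω := by rw [hjump s, hXi0]; ring
      simp only [hf, hg, if_pos hIoc, this]
    · simp only [hf, hg, if_pos hIoc, hφK s _ ω hK, ENNReal.ofReal_zero]
  · simp only [hf, hg, if_neg hIoc]
end
end

section
/- Let μ be an integer-valued random measure with D = {μ({t}×ℝ)>0}, J the predictable support of D, and K the largest predictable subset of D. Then the following are equivalent up to evanescence: (a) J = K; (b) D is the disjoint union of K and ∪_n [[T^i_n]] with (T^i_n) disjoint totally inaccessible times. -/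
open MeasureTheory Filter Set Function
open scoped ENNReal

noncomputable section

variable {Ω : Type*}

/-- `J = K` (up to evanescence) iff `D` is the disjoint union of `K` and
countably many graphs of totally inaccessible times. The predictable projection
`pproj` is given abstractly with its relevant properties: additivity, `ᵖ(1_D) = 1_J`,
`ᵖ(1_K) = 1_K`, and the characterization of subsets of `D` with evanescent predictable
projection via predictable times. -/
theorem J_eq_K_iff_D_decomposes
    {m : MeasurableSpace Ω} (F : Filtration ℝ m) (P : Measure Ω) [IsProbabilityMeasure P]
    (D J K : Set (ℝ × Ω))
    (pproj : (ℝ × Ω → ℝ) → (ℝ × Ω → ℝ))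
    (hthin : ∃ R : ℕ → Ω → ℝ, D = ⋃ n, graphOf (R n))
    (hKD : K ⊆ D)
    (hKpred : PredictableSet F K) (hJpred : PredictableSet F J)
    (hadd : ∀ f g : ℝ × Ω → ℝ, ∀ᵐ ω ∂P, ∀ t : ℝ,
      pproj (f + g) (t, ω) = pproj f (t, ω) + pproj g (t, ω))
    (hD : ∀ᵐ ω ∂P, ∀ t : ℝ,
      pproj (Set.indicator D (1 : ℝ × Ω → ℝ)) (t, ω) = Set.indicator J (1 : ℝ × Ω → ℝ) (t, ω))
    (hK : ∀ᵐ ω ∂P, ∀ t : ℝ,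
      pproj (Set.indicator K (1 : ℝ × Ω → ℝ)) (t, ω) = Set.indicator K (1 : ℝ × Ω → ℝ) (t, ω))
    (hchar : ∀ B : Set (ℝ × Ω), B ⊆ D →
      ((∀ᵐ ω ∂P, ∀ t : ℝ, pproj (Set.indicator B (1 : ℝ × Ω → ℝ)) (t, ω) = 0) ↔
        ∀ S : Ω → ℝ, IsPredictableTime F S → ∀ᵐ ω ∂P, (S ω, ω) ∉ B)) :
    (∀ᵐ ω ∂P, ∀ t : ℝ, (t, ω) ∈ J ↔ (t, ω) ∈ K) ↔
    (∃ T : ℕ → Ω → ℝ,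
      (∀ n, TotallyInaccessible F P (T n)) ∧
      (∀ n k, n ≠ k → Disjoint (graphOf (T n)) (graphOf (T k))) ∧
      (∀ n, ∀ᵐ ω ∂P, ∀ t : ℝ, (t, ω) ∈ graphOf (T n) → (t, ω) ∉ K) ∧
      (∀ᵐ ω ∂P, ∀ t : ℝ, (t, ω) ∈ D ↔ ((t, ω) ∈ K ∨ ∃ n, (t, ω) ∈ graphOf (T n)))) := by
  classical
  obtain ⟨R, hR⟩ := hthin
  set B : Set (ℝ × Ω) := D \ K with hBdef
  have hBD : B ⊆ D := Set.diff_subset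
  have hind : Set.indicator B (1 : ℝ × Ω → ℝ) + Set.indicator K (1 : ℝ × Ω → ℝ)
      = Set.indicator D (1 : ℝ × Ω → ℝ) := by
    funext p
    by_cases hp : p ∈ K
    · have hpD : p ∈ D := hKD hp
      have hpB : p ∉ B := fun h => h.2 hp
      simp [Set.indicator_of_mem, Set.indicator_of_notMem, hp, hpD, hpB]
    · by_cases hpD : p ∈ D
      · have hpB : p ∈ B := ⟨hpD, hp⟩
        simp [Set.indicator_of_mem, Set.indicator_of_notMem, hp, hpD, hpB]
      · have hpB : p ∉ B := fun h => hpD h.1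
        simp [Set.indicator_of_notMem, hp, hpD, hpB]
  have key : ∀ᵐ ω ∂P, ∀ t : ℝ,
      pproj (Set.indicator D (1 : ℝ × Ω → ℝ)) (t, ω)
        = pproj (Set.indicator B (1 : ℝ × Ω → ℝ)) (t, ω)
          + pproj (Set.indicator K (1 : ℝ × Ω → ℝ)) (t, ω) := by
    have h := hadd (Set.indicator B (1 : ℝ × Ω → ℝ)) (Set.indicator K (1 : ℝ × Ω → ℝ))
    rw [hind] at h
    exact h
  constructor
  · intro hJK
    have hB0 : ∀ᵐ ω ∂P, ∀ t : ℝ, pproj (Set.indicator B (1 : ℝ × Ω → ℝ)) (t, ω) = 0 := by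
      filter_upwards [key, hD, hK, hJK] with ω h1 h2 h3 h4
      intro t
      have heq := h1 t
      rw [h2 t, h3 t] at heq
      have hJKind : Set.indicator J (1 : ℝ × Ω → ℝ) (t, ω)
          = Set.indicator K (1 : ℝ × Ω → ℝ) (t, ω) := by
        by_cases h : (t, ω) ∈ J
        · rw [Set.indicator_of_mem h, Set.indicator_of_mem ((h4 t).mp h)]
        · rw [Set.indicator_of_notMem h,
            Set.indicator_of_notMem (fun hk => h ((h4 t).mpr hk))]
      rw [hJKind] at heq
      linarith
    have hcharB := (hchar B hBD).mp hB0
    set T : ℕ → Ω → ℝ := fun n ω =>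
      if (R n ω, ω) ∈ B ∧ ∀ m < n, R m ω ≠ R n ω then R n ω else 0 with hTdef
    have hgr : ∀ n, graphOf (T n) ⊆ B := by
      intro n p hp
      obtain ⟨hpos, hTeq⟩ := hp
      by_cases hc : (R n p.2, p.2) ∈ B ∧ ∀ m < n, R m p.2 ≠ R n p.2
      · have : T n p.2 = R n p.2 := if_pos hc
        rw [this] at hTeq
        have := hc.1
        rw [hTeq] at this
        exact this
      · have : T n p.2 = 0 := by simp only [hTdef]; rw [if_neg hc]
        rw [this] at hTeq
        rw [← hTeq] at hpos
        exact absurd hpos (lt_irrefl 0)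
    refine ⟨T, ?_, ?_, ?_, ?_⟩
    · intro n S hS
      filter_upwards [hcharB S hS] with ω hω
      rintro ⟨hpos, heq⟩
      have hmem : (T n ω, ω) ∈ B := hgr n ⟨hpos, rfl⟩
      rw [heq] at hmem
      exact hω hmem
    · intro n k hnk
      rw [Set.disjoint_left]
      rintro ⟨t, ω⟩ ⟨ht, hTn⟩ ⟨ht', hTk⟩
      have hcn : (R n ω, ω) ∈ B ∧ ∀ m < n, R m ω ≠ R n ω := by
        by_contra hc
        have : T n ω = 0 := by simp only [hTdef]; rw [if_neg hc]
        rw [this] at hTn; exact absurd ht (by rw [← hTn]; exact lt_irrefl 0)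
      have hck : (R k ω, ω) ∈ B ∧ ∀ m < k, R m ω ≠ R k ω := by
        by_contra hc
        have : T k ω = 0 := by simp only [hTdef]; rw [if_neg hc]
        rw [this] at hTk; exact absurd ht' (by rw [← hTk]; exact lt_irrefl 0)
      have hRn : R n ω = t := by
        have : T n ω = R n ω := if_pos hcn
        rw [← this, hTn]
      have hRk : R k ω = t := by
        have : T k ω = R k ω := if_pos hck
        rw [← this, hTk]
      rcases hnk.lt_or_gt with h | h
      · exact hck.2 n h (by rw [hRn, hRk])
      · exact hcn.2 k h (by rw [hRn, hRk])
    · intro n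
      filter_upwards with ω
      intro t ht
      exact (hgr n ht).2
    · filter_upwards with ω
      intro t
      constructor
      · intro htD
        by_cases htK : (t, ω) ∈ K
        · exact Or.inl htK
        · right
          have htD' := htD
          rw [hR] at htD'
          obtain ⟨n, hn⟩ := Set.mem_iUnion.mp htD'
          have hex : ∃ n, R n ω = t := ⟨n, hn.2⟩
          set n0 := Nat.find hex with hn0
          have hspec : R n0 ω = t := Nat.find_spec hex
          have hcond : (R n0 ω, ω) ∈ B ∧ ∀ m < n0, R m ω ≠ R n0 ω := by
            constructor
            · rw [hspec]; exact ⟨htD, htK⟩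
            · intro m hm hmeq
              exact Nat.find_min hex hm (by rw [hmeq, hspec])
          refine ⟨n0, hn.1, ?_⟩
          have : T n0 ω = R n0 ω := if_pos hcond
          rw [this, hspec]
      · rintro (hk | ⟨n, hn⟩)
        · exact hKD hk
        · exact hBD (hgr n hn)
  · rintro ⟨T, hTin, hTdisj, hTK, hTdec⟩
    have hB0 : ∀ S : Ω → ℝ, IsPredictableTime F S → ∀ᵐ ω ∂P, (S ω, ω) ∉ B := by
      intro S hS
      have hall : ∀ᵐ ω ∂P, ∀ n, ¬(0 < T n ω ∧ T n ω = S ω) :=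
        ae_all_iff.mpr fun n => hTin n S hS
      filter_upwards [hall, hTdec] with ω h1 h2
      rintro ⟨hD', hK'⟩
      rcases (h2 (S ω)).mp hD' with hk | ⟨n, hn⟩
      · exact hK' hk
      · exact h1 n ⟨hn.2 ▸ hn.1, hn.2⟩
    have hBproj := (hchar B hBD).mpr hB0
    filter_upwards [key, hD, hK, hBproj] with ω h1 h2 h3 h4
    intro t
    have heq := h1 t
    rw [h2 t, h3 t, h4 t, zero_add] at heq
    constructor
    · intro hJ'
      rw [Set.indicator_of_mem hJ'] at heq
      by_contra hK'
      rw [Set.indicator_of_notMem hK'] at heq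
      norm_num at heq
    · intro hK'
      rw [Set.indicator_of_mem hK'] at heq
      by_contra hJ'
      rw [Set.indicator_of_notMem hJ'] at heq
      norm_num at heq
end
end
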